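/- Under the hypotheses ∑_{i=1}^k f_i^k = F, f_i^k ≥ 0, f_i^k ≥ f_i^{k+1} for all i < k (permanence), and f_k^k ≥ f_k^{k+1} + f_{k+1}^{k+1} for all k (single-Sybil-proofness), equality must hold everywhere: f_i^k = f_i^{k+1} for all i < k, and f_k^k = f_k^{k+1} + f_{k+1}^{k+1} for all k. -/

import Mathlib

theorem stmt_11 (F : ℝ) (hF : 0 < F) (f : ℕ → ℕ → ℝ)
    (hsum : ∀ k : ℕ, 1 ≤ k → ∑ i ∈ Finset.Icc 1 k, f k i = F)
    (hnonneg : ∀ k i : ℕ, 0 ≤ f k i)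
    (hperm : ∀ k i : ℕ, 1 ≤ i → i < k → f k i ≥ f (k + 1) i)
    (hsybil : ∀ k : ℕ, 1 ≤ k → f k k ≥ f (k + 1) k + f (k + 1) (k + 1)) :
    (∀ k i : ℕ, 1 ≤ i → i < k → f k i = f (k + 1) i) ∧
    (∀ k : ℕ, 1 ≤ k → f k k = f (k + 1) k + f (k + 1) (k + 1)) := by
  have main : ∀ k : ℕ, 1 ≤ k → ∀ i ∈ Finset.Icc 1 k,
      f k i = (if i = k then f (k + 1) k + f (k + 1) (k + 1) else f (k + 1) i) := by
    intro k hk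
    set h : ℕ → ℝ := fun i => if i = k then f (k + 1) k + f (k + 1) (k + 1) else f (k + 1) i
      with hh
    have hle : ∀ i ∈ Finset.Icc 1 k, h i ≤ f k i := by
      intro i hi
      simp only [Finset.mem_Icc] at hi
      by_cases hik : i = k
      · subst hik; simp only [hh, if_pos rfl]; exact hsybil i hi.1
      · simp only [hh, if_neg hik]
        exact hperm k i hi.1 (lt_of_le_of_ne hi.2 hik)
    have hdiff : ∑ i ∈ Finset.Icc 1 k, (h i - f (k + 1) i) = f (k + 1) (k + 1) := by
      rw [Finset.sum_eq_single_of_mem k (by simp [Finset.mem_Icc, hk])]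
      · simp [hh]
      · intro b _ hb
        simp [hh, hb]
    have hsumh : ∑ i ∈ Finset.Icc 1 k, h i = F := by
      have h1 : ∑ i ∈ Finset.Icc 1 k, h i
          = ∑ i ∈ Finset.Icc 1 k, f (k + 1) i + f (k + 1) (k + 1) := by
        rw [← hdiff, Finset.sum_sub_distrib]; ring
      rw [h1, ← Finset.sum_Icc_succ_top (by omega : 1 ≤ k + 1)]
      exact hsum (k + 1) (by omega)
    have heq : ∑ i ∈ Finset.Icc 1 k, f k i = ∑ i ∈ Finset.Icc 1 k, h i := by
      rw [hsum k hk, hsumh]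
    exact fun i hi => ((Finset.sum_eq_sum_iff_of_le hle).mp heq.symm i hi).symm
  constructor
  · intro k i hi hik
    have := main k (by omega) i (by simp [Finset.mem_Icc]; omega)
    rwa [if_neg (by omega)] at this
  · intro k hk
    have := main k hk k (by simp [Finset.mem_Icc, hk])
    rwa [if_pos rfl] at this
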